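/- Let A, B, C be groupoids and S, T distributors as above. The comprehensive (final, discrete fibration) factorization of the span functor T ⋄ S ⥤ A × C (projecting the pullback of the element categories to A × C) has its discrete fibration part isomorphic over A × C to the category of elements of the composite distributor T ⊗ S. -/

import Mathlib

open CategoryTheory Opposite

universe w v u

def IsDiscreteFibration {A : Type*} [Category A] {B : Type*} [Category B] (F : A ⥤ B) : Prop :=
  ∀ {a' : A} {b : B} (β : b ⟶ F.obj a'),
    ∃! p : Σ a : A, a ⟶ a',
      (⟨F.obj p.1, F.map p.2⟩ : Σ x : B, x ⟶ F.obj a') = ⟨b, β⟩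


section PairLemmas

universe u1 v1 u2 v2

variable {X : Type u1} [Category.{v1} X] {Y : Type u2} [Category.{v2} Y]

lemma pair_comp_fst {x1 x2 x3 : X} {y : Y} (f : x1 ⟶ x2) (g : x2 ⟶ x3) :
    @CategoryStruct.comp (X × Y) _ (x1, y) (x2, y) (x3, y) (f, 𝟙 y) (g, 𝟙 y) =
      (f ≫ g, 𝟙 y) := by
  simp [prod_comp]

lemma pair_comp_snd {x : X} {y1 y2 y3 : Y} (f : y1 ⟶ y2) (g : y2 ⟶ y3) :
    @CategoryStruct.comp (X × Y) _ (x, y1) (x, y2) (x, y3) (𝟙 x, f) (𝟙 x, g) =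
      (𝟙 x, f ≫ g) := by
  simp [prod_comp]

lemma pair_swap {x1 x2 : X} {y1 y2 : Y} (f : x1 ⟶ x2) (g : y1 ⟶ y2) :
    @CategoryStruct.comp (X × Y) _ (x1, y1) (x2, y1) (x2, y2) (f, 𝟙 y1) (𝟙 x2, g) =
      @CategoryStruct.comp (X × Y) _ (x1, y1) (x1, y2) (x2, y2) (𝟙 x1, g) (f, 𝟙 y2) := by
  simp [prod_comp]

end PairLemmas

section Distrib

variable {A : Type u} [Groupoid.{u} A] {B : Type u} [Groupoid.{u} B]

/-- Compatibility of the two actions of a distributor with composition. -/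
lemma dist_comm_comp (S : Bᵒᵖ × A ⥤ Type u)
    {a1 a2 a3 : A} {b1 b2 b3 : B} (α1 : a1 ⟶ a2) (α2 : a2 ⟶ a3)
    (β1 : b1 ⟶ b2) (β2 : b2 ⟶ b3)
    {s1 : S.obj (op b1, a1)} {s2 : S.obj (op b2, a2)} {s3 : S.obj (op b3, a3)}
    (h1 : S.map ((𝟙 (op b1), α1) : (op b1, a1) ⟶ (op b1, a2)) s1 =
      S.map ((β1.op, 𝟙 a2) : (op b2, a2) ⟶ (op b1, a2)) s2)
    (h2 : S.map ((𝟙 (op b2), α2) : (op b2, a2) ⟶ (op b2, a3)) s2 =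
      S.map ((β2.op, 𝟙 a3) : (op b3, a3) ⟶ (op b2, a3)) s3) :
    S.map ((𝟙 (op b1), α1 ≫ α2) : (op b1, a1) ⟶ (op b1, a3)) s1 =
      S.map (((β1 ≫ β2).op, 𝟙 a3) : (op b3, a3) ⟶ (op b1, a3)) s3 := by
  calc S.map ((𝟙 (op b1), α1 ≫ α2) : (op b1, a1) ⟶ (op b1, a3)) s1
      = S.map ((𝟙 (op b1), α2) : (op b1, a2) ⟶ (op b1, a3))
          (S.map ((𝟙 (op b1), α1) : (op b1, a1) ⟶ (op b1, a2)) s1) := by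
        rw [← FunctorToTypes.map_comp_apply, pair_comp_snd]
    _ = S.map ((𝟙 (op b1), α2) : (op b1, a2) ⟶ (op b1, a3))
          (S.map ((β1.op, 𝟙 a2) : (op b2, a2) ⟶ (op b1, a2)) s2) := by rw [h1]
    _ = S.map ((β1.op, 𝟙 a3) : (op b2, a3) ⟶ (op b1, a3))
          (S.map ((𝟙 (op b2), α2) : (op b2, a2) ⟶ (op b2, a3)) s2) := by
        rw [← FunctorToTypes.map_comp_apply, ← FunctorToTypes.map_comp_apply]
        congr 1; simp [prod_comp]
    _ = S.map ((β1.op, 𝟙 a3) : (op b2, a3) ⟶ (op b1, a3))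
          (S.map ((β2.op, 𝟙 a3) : (op b3, a3) ⟶ (op b2, a3)) s3) := by rw [h2]
    _ = S.map (((β1 ≫ β2).op, 𝟙 a3) : (op b3, a3) ⟶ (op b1, a3)) s3 := by
        rw [← FunctorToTypes.map_comp_apply, pair_comp_fst, op_comp]

end Distrib

/-- The category of elements `𝕊` of a distributor `S : Bᵒᵖ × A ⥤ Type`. -/
structure Delt {A : Type u} [Groupoid.{u} A] {B : Type u} [Groupoid.{u} B]
    (S : Bᵒᵖ × A ⥤ Type u) where
  a : A
  b : B
  s : S.obj (op b, a)

namespace Delt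

variable {A : Type u} [Groupoid.{u} A] {B : Type u} [Groupoid.{u} B] {S : Bᵒᵖ × A ⥤ Type u}

/-- Morphisms in the category of elements of a distributor. -/
@[ext]
structure Hom (X Y : Delt S) where
  α : X.a ⟶ Y.a
  β : X.b ⟶ Y.b
  comm : S.map ((𝟙 (op X.b), α) : (op X.b, X.a) ⟶ (op X.b, Y.a)) X.s =
      S.map ((β.op, 𝟙 Y.a) : (op Y.b, Y.a) ⟶ (op X.b, Y.a)) Y.s

instance : Category (Delt S) where
  Hom := Hom
  id X := ⟨𝟙 X.a, 𝟙 X.b, by simp⟩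
  comp {X Y Z} f g := ⟨f.α ≫ g.α, f.β ≫ g.β, dist_comm_comp S f.α g.α f.β g.β f.comm g.comm⟩
  id_comp f := by apply Hom.ext <;> simp
  comp_id f := by apply Hom.ext <;> simp
  assoc f g h := by apply Hom.ext <;> simp

/-- The projection `𝕊 ⥤ A × B`. -/
def proj (S : Bᵒᵖ × A ⥤ Type u) : Delt S ⥤ A × B where
  obj X := (X.a, X.b)
  map {X Y} f := (Hom.α f, Hom.β f)
  map_id X := rfl
  map_comp f g := rfl

end Delt

section Tensor

variable {A : Type u} [Groupoid.{u} A] {B : Type u} [Groupoid.{u} B]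
  {C : Type u} [Groupoid.{u} C]

/-- The relation generating the coend quotient: `(t, s'·β) ∼ (β·t, s')`. -/
def TensorRel (S : Bᵒᵖ × A ⥤ Type u) (T : Cᵒᵖ × B ⥤ Type u) (c : Cᵒᵖ) (a : A) :
    (Σ b : B, T.obj (c, b) × S.obj (op b, a)) →
    (Σ b : B, T.obj (c, b) × S.obj (op b, a)) → Prop :=
  fun p q => ∃ β : p.1 ⟶ q.1,
    q.2.1 = T.map ((𝟙 c, β) : (c, p.1) ⟶ (c, q.1)) p.2.1 ∧
    p.2.2 = S.map ((β.op, 𝟙 a) : (op q.1, a) ⟶ (op p.1, a)) q.2.2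

/-- The composite distributor `T ⊗ S`, given by the coend
`(T ⊗ S)(c,a) = ∫^b T(c,b) × S(b,a)`. -/
def Tensor (S : Bᵒᵖ × A ⥤ Type u) (T : Cᵒᵖ × B ⥤ Type u) : Cᵒᵖ × A ⥤ Type u where
  obj x := Quot (TensorRel S T x.1 x.2)
  map {x y} f := TypeCat.ofHom <| Quot.map
    (fun p => ⟨p.1, T.map ((f.1, 𝟙 p.1) : (x.1, p.1) ⟶ (y.1, p.1)) p.2.1,
      S.map ((𝟙 (op p.1), f.2) : (op p.1, x.2) ⟶ (op p.1, y.2)) p.2.2⟩)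
    (by
      rintro ⟨b, t, s⟩ ⟨b', t', s'⟩ ⟨β, h1, h2⟩
      dsimp only at h1 h2 ⊢
      refine ⟨β, ?_, ?_⟩
      · rw [h1, ← FunctorToTypes.map_comp_apply, ← FunctorToTypes.map_comp_apply, pair_swap]
      · rw [h2, ← FunctorToTypes.map_comp_apply, ← FunctorToTypes.map_comp_apply, pair_swap])
  map_id x := by
    ext q; revert q; refine fun q => Quot.inductionOn q fun p => ?_
    obtain ⟨b, t, s⟩ := p
    show Quot.mk (TensorRel S T x.1 x.2)
        ⟨b, T.map ((𝟙 x.1, 𝟙 b) : (x.1, b) ⟶ (x.1, b)) t,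
          S.map ((𝟙 (op b), 𝟙 x.2) : (op b, x.2) ⟶ (op b, x.2)) s⟩ =
      Quot.mk (TensorRel S T x.1 x.2) ⟨b, t, s⟩
    have e1 : T.map ((𝟙 x.1, 𝟙 b) : (x.1, b) ⟶ (x.1, b)) t = t := by
      rw [show ((𝟙 x.1, 𝟙 b) : (x.1, b) ⟶ (x.1, b)) = 𝟙 (x.1, b) from rfl,
        FunctorToTypes.map_id_apply]
    have e2 : S.map ((𝟙 (op b), 𝟙 x.2) : (op b, x.2) ⟶ (op b, x.2)) s = s := by
      rw [show ((𝟙 (op b), 𝟙 x.2) : (op b, x.2) ⟶ (op b, x.2)) = 𝟙 (op b, x.2) from rfl,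
        FunctorToTypes.map_id_apply]
    rw [e1, e2]
  map_comp {x y z} f g := by
    ext q; revert q; refine fun q => Quot.inductionOn q fun p => ?_
    obtain ⟨b, t, s⟩ := p
    show Quot.mk (TensorRel S T z.1 z.2)
        ⟨b, T.map ((f.1 ≫ g.1, 𝟙 b) : (x.1, b) ⟶ (z.1, b)) t,
          S.map ((𝟙 (op b), f.2 ≫ g.2) : (op b, x.2) ⟶ (op b, z.2)) s⟩ =
      Quot.mk (TensorRel S T z.1 z.2)
        ⟨b, T.map ((g.1, 𝟙 b) : (y.1, b) ⟶ (z.1, b))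
              (T.map ((f.1, 𝟙 b) : (x.1, b) ⟶ (y.1, b)) t),
          S.map ((𝟙 (op b), g.2) : (op b, y.2) ⟶ (op b, z.2))
            (S.map ((𝟙 (op b), f.2) : (op b, x.2) ⟶ (op b, y.2)) s)⟩
    have e1 : T.map ((f.1 ≫ g.1, 𝟙 b) : (x.1, b) ⟶ (z.1, b)) t =
        T.map ((g.1, 𝟙 b) : (y.1, b) ⟶ (z.1, b))
          (T.map ((f.1, 𝟙 b) : (x.1, b) ⟶ (y.1, b)) t) := by
      rw [← pair_comp_fst, FunctorToTypes.map_comp_apply]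
    have e2 : S.map ((𝟙 (op b), f.2 ≫ g.2) : (op b, x.2) ⟶ (op b, z.2)) s =
        S.map ((𝟙 (op b), g.2) : (op b, y.2) ⟶ (op b, z.2))
          (S.map ((𝟙 (op b), f.2) : (op b, x.2) ⟶ (op b, y.2)) s) := by
      rw [← pair_comp_snd, FunctorToTypes.map_comp_apply]
    rw [e1, e2]

end Tensor

section Diamond

variable {A : Type u} [Groupoid.{u} A] {B : Type u} [Groupoid.{u} B]
  {C : Type u} [Groupoid.{u} C]

/-- The (strict) pullback `T ⋄ S` of the two element categories `𝕊 ⥤ B` and `𝕋 ⥤ B`. -/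
structure Diamond (S : Bᵒᵖ × A ⥤ Type u) (T : Cᵒᵖ × B ⥤ Type u) where
  a : A
  b : B
  c : C
  s : S.obj (op b, a)
  t : T.obj (op c, b)

namespace Diamond

variable {S : Bᵒᵖ × A ⥤ Type u} {T : Cᵒᵖ × B ⥤ Type u}

/-- Morphisms in the pullback `T ⋄ S`. -/
@[ext]
structure Hom (X Y : Diamond S T) where
  α : X.a ⟶ Y.a
  β : X.b ⟶ Y.b
  γ : X.c ⟶ Y.c
  commS : S.map ((𝟙 (op X.b), α) : (op X.b, X.a) ⟶ (op X.b, Y.a)) X.s =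
      S.map ((β.op, 𝟙 Y.a) : (op Y.b, Y.a) ⟶ (op X.b, Y.a)) Y.s
  commT : T.map ((𝟙 (op X.c), β) : (op X.c, X.b) ⟶ (op X.c, Y.b)) X.t =
      T.map ((γ.op, 𝟙 Y.b) : (op Y.c, Y.b) ⟶ (op X.c, Y.b)) Y.t

instance : Category (Diamond S T) where
  Hom := Hom
  id X := ⟨𝟙 X.a, 𝟙 X.b, 𝟙 X.c, by simp, by simp⟩
  comp {X Y Z} f g := ⟨f.α ≫ g.α, f.β ≫ g.β, f.γ ≫ g.γ,
    dist_comm_comp S f.α g.α f.β g.β f.commS g.commS,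
    dist_comm_comp T f.β g.β f.γ g.γ f.commT g.commT⟩
  id_comp f := by apply Hom.ext <;> simp
  comp_id f := by apply Hom.ext <;> simp
  assoc f g h := by apply Hom.ext <;> simp

/-- The projection of the pullback span to `A × C`. -/
def proj (S : Bᵒᵖ × A ⥤ Type u) (T : Cᵒᵖ × B ⥤ Type u) : Diamond S T ⥤ A × C where
  obj X := (X.a, X.c)
  map {X Y} f := (Hom.α f, Hom.γ f)
  map_id X := rfl
  map_comp f g := rfl

end Diamond

/-- The canonical comparison functor `T ⋄ S ⥤ 𝕋 ⊗ 𝕊` from the pullback of the element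
categories to the category of elements of the composite distributor, sending `(s, t)` to
the class `s ⊗ t`. -/
def Qfun (S : Bᵒᵖ × A ⥤ Type u) (T : Cᵒᵖ × B ⥤ Type u) :
    Diamond S T ⥤ Delt (Tensor S T) where
  obj X := ⟨X.a, X.c, Quot.mk _ ⟨X.b, X.t, X.s⟩⟩
  map {X Y} f := ⟨Diamond.Hom.α f, Diamond.Hom.γ f, by
    show Quot.mk (TensorRel S T (op X.c) Y.a)
        ⟨X.b, T.map ((𝟙 (op X.c), 𝟙 X.b) : (op X.c, X.b) ⟶ (op X.c, X.b)) X.t,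
          S.map ((𝟙 (op X.b), f.α) : (op X.b, X.a) ⟶ (op X.b, Y.a)) X.s⟩ =
      Quot.mk (TensorRel S T (op X.c) Y.a)
        ⟨Y.b, T.map ((f.γ.op, 𝟙 Y.b) : (op Y.c, Y.b) ⟶ (op X.c, Y.b)) Y.t,
          S.map ((𝟙 (op Y.b), 𝟙 Y.a) : (op Y.b, Y.a) ⟶ (op Y.b, Y.a)) Y.s⟩
    have e1 : T.map ((𝟙 (op X.c), 𝟙 X.b) : (op X.c, X.b) ⟶ (op X.c, X.b)) X.t = X.t := by
      rw [show ((𝟙 (op X.c), 𝟙 X.b) : (op X.c, X.b) ⟶ (op X.c, X.b)) = 𝟙 (op X.c, X.b)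
        from rfl, FunctorToTypes.map_id_apply]
    have e2 : S.map ((𝟙 (op Y.b), 𝟙 Y.a) : (op Y.b, Y.a) ⟶ (op Y.b, Y.a)) Y.s = Y.s := by
      rw [show ((𝟙 (op Y.b), 𝟙 Y.a) : (op Y.b, Y.a) ⟶ (op Y.b, Y.a)) = 𝟙 (op Y.b, Y.a)
        from rfl, FunctorToTypes.map_id_apply]
    rw [e1, e2]
    exact Quot.sound ⟨Diamond.Hom.β f, (Diamond.Hom.commT f).symm, Diamond.Hom.commS f⟩⟩
  map_id X := by apply Delt.Hom.ext <;> rfl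
  map_comp f g := by apply Delt.Hom.ext <;> rfl

section Aux

lemma sigma_eqToHom_comp {X : Type*} [Category X] {x y z : X} (h : x = y) (k : y ⟶ z) :
    (⟨x, eqToHom h ≫ k⟩ : Σ w : X, w ⟶ z) = ⟨y, k⟩ := by subst h; simp

lemma sigma_hom_eq {X : Type*} [Category X] {x y z : X} {u : x ⟶ z} {v : y ⟶ z}
    (h : (⟨x, u⟩ : Σ w : X, w ⟶ z) = ⟨y, v⟩) : ∃ e : x = y, u = eqToHom e ≫ v := by
  cases h
  exact ⟨rfl, by simp⟩

@[simp] lemma prod_comp_fst' {X : Type*} [Category X] {Y : Type*} [Category Y]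
    {p q r : X × Y} (f : p ⟶ q) (g : q ⟶ r) : (f ≫ g).1 = f.1 ≫ g.1 := rfl

@[simp] lemma prod_comp_snd' {X : Type*} [Category X] {Y : Type*} [Category Y]
    {p q r : X × Y} (f : p ⟶ q) (g : q ⟶ r) : (f ≫ g).2 = f.2 ≫ g.2 := rfl

@[simp] lemma prod_id_fst' {X : Type*} [Category X] {Y : Type*} [Category Y]
    (p : X × Y) : Prod.fst (𝟙 p) = 𝟙 p.1 := rfl

@[simp] lemma prod_id_snd' {X : Type*} [Category X] {Y : Type*} [Category Y]
    (p : X × Y) : Prod.snd (𝟙 p) = 𝟙 p.2 := rfl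

@[simp] lemma prod_eqToHom_fst {X : Type*} [Category X] {Y : Type*} [Category Y]
    {p q : X × Y} (h : p = q) : (eqToHom h).1 = eqToHom (congrArg Prod.fst h) := by
  subst h; rfl

@[simp] lemma prod_eqToHom_snd {X : Type*} [Category X] {Y : Type*} [Category Y]
    {p q : X × Y} (h : p = q) : (eqToHom h).2 = eqToHom (congrArg Prod.snd h) := by
  subst h; rfl

lemma sigma_eqToHom {X : Type*} [Category X] {x y : X} (h : x = y) :
    (⟨x, eqToHom h⟩ : Σ w : X, w ⟶ y) = ⟨y, 𝟙 y⟩ := by subst h; rfl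

end Aux

section Main

variable {A : Type u} [Groupoid.{u} A] {B : Type u} [Groupoid.{u} B]
  {C : Type u} [Groupoid.{u} C]
  (S : Bᵒᵖ × A ⥤ Type u) (T : Cᵒᵖ × B ⥤ Type u)
  {M : Type u} [Category.{u} M] (E : Diamond S T ⥤ M) (D : M ⥤ A × C)

/-- uniqueness of lifts along a discrete fibration -/
lemma lift_eq (hD : IsDiscreteFibration D) {m n m' : M} (g : m ⟶ m') (h : n ⟶ m')
    (e : (⟨D.obj m, D.map g⟩ : Σ x : A × C, x ⟶ D.obj m') = ⟨D.obj n, D.map h⟩) :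
    (⟨m, g⟩ : Σ x : M, x ⟶ m') = ⟨n, h⟩ := by
  obtain ⟨p, hp, hu⟩ := hD (D.map h)
  exact (hu ⟨m, g⟩ e).trans (hu ⟨n, h⟩ rfl).symm

lemma D_faithful (hD : IsDiscreteFibration D) : D.Faithful := by
  constructor
  intro m m' f g h
  obtain ⟨e, he⟩ := sigma_hom_eq (lift_eq D hD f g (by rw [h]))
  simpa using he

/-- inverting the action across a distributor-element compatibility equation -/
lemma tensor_shift (F : Cᵒᵖ × A ⥤ Type u) {a a' : A} {c c' : C}
    {x : F.obj (op c, a)} {y : F.obj (op c', a')} (α : a ⟶ a') (γ : c ⟶ c')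
    (h : F.map ((𝟙 (op c), α) : (op c, a) ⟶ (op c, a')) x =
         F.map ((γ.op, 𝟙 a') : (op c', a') ⟶ (op c, a')) y) :
    x = F.map ((γ.op, Groupoid.inv α) : (op c', a') ⟶ (op c, a)) y := by
  have h2 := congrArg (F.map ((𝟙 (op c), Groupoid.inv α) : (op c, a') ⟶ (op c, a))) h
  rw [← FunctorToTypes.map_comp_apply, ← FunctorToTypes.map_comp_apply] at h2
  have e1 : (((𝟙 (op c), α) : (op c, a) ⟶ (op c, a')) ≫
      ((𝟙 (op c), Groupoid.inv α) : (op c, a') ⟶ (op c, a))) = 𝟙 (op c, a) := by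
    rw [prod_comp]
    simp [prod_id, Groupoid.inv_eq_inv]
  rw [e1, FunctorToTypes.map_id_apply] at h2
  rw [h2]
  congr 1
  rw [prod_comp]
  simp

/-- transporting elements in a fibre of the element category along identities -/
lemma Efib (hD : IsDiscreteFibration D) (hfac : E ⋙ D = Diamond.proj S T)
    {a : A} {c : C} {b b' : B} {t : T.obj (op c, b)} {s : S.obj (op b, a)}
    {t' : T.obj (op c, b')} {s' : S.obj (op b', a)} (β : b ⟶ b')
    (h1 : t' = T.map ((𝟙 (op c), β) : (op c, b) ⟶ (op c, b')) t)
    (h2 : s = S.map ((β.op, 𝟙 a) : (op b', a) ⟶ (op b, a)) s') :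
    E.obj ⟨a, b, c, s, t⟩ = E.obj ⟨a, b', c, s', t'⟩ := by
  have hS : S.map ((𝟙 (op b), 𝟙 a) : (op b, a) ⟶ (op b, a)) s =
      S.map ((β.op, 𝟙 a) : (op b', a) ⟶ (op b, a)) s' := by
    rw [show ((𝟙 (op b), 𝟙 a) : (op b, a) ⟶ (op b, a)) = 𝟙 (op b, a) from rfl,
      FunctorToTypes.map_id_apply]
    exact h2
  have hT : T.map ((𝟙 (op c), β) : (op c, b) ⟶ (op c, b')) t =
      T.map (((𝟙 c).op, 𝟙 b') : (op c, b') ⟶ (op c, b')) t' := by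
    rw [show (((𝟙 c).op, 𝟙 b') : (op c, b') ⟶ (op c, b')) = 𝟙 (op c, b') from rfl,
      FunctorToTypes.map_id_apply]
    exact h1.symm
  let f : (⟨a, b, c, s, t⟩ : Diamond S T) ⟶ (⟨a, b', c, s', t'⟩ : Diamond S T) :=
    ⟨𝟙 a, β, 𝟙 c, hS, hT⟩
  have hmap := Functor.congr_hom hfac f
  have hproj : (Diamond.proj S T).map f = 𝟙 ((a, c) : A × C) := rfl
  have hEf : D.map (E.map f) =
      eqToHom ((Functor.congr_obj hfac ⟨a, b, c, s, t⟩).trans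
        (Functor.congr_obj hfac ⟨a, b', c, s', t'⟩).symm) := by
    rw [show D.map (E.map f) = (E ⋙ D).map f from rfl, hmap, hproj]
    erw [Category.id_comp]
    exact eqToHom_trans _ _
  have key := lift_eq D hD (E.map f) (𝟙 (E.obj ⟨a, b', c, s', t'⟩)) (by
    rw [hEf, D.map_id]
    exact sigma_eqToHom
      ((Functor.congr_obj hfac (⟨a, b, c, s, t⟩ : Diamond S T)).trans
        (Functor.congr_obj hfac (⟨a, b', c, s', t'⟩ : Diamond S T)).symm))
  exact congrArg Sigma.fst key

/-- the inverse fibre map: from elements of the composite to objects of `M` -/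
def Psi (hD : IsDiscreteFibration D) (hfac : E ⋙ D = Diamond.proj S T) (x : A × C) :
    (Tensor S T).obj (op x.2, x.1) → M :=
  Quot.lift (fun p => E.obj ⟨x.1, p.1, x.2, p.2.2, p.2.1⟩) (by
    rintro ⟨b, t, s⟩ ⟨b', t', s'⟩ ⟨β, h1, h2⟩
    exact Efib S T E D hD hfac β h1 h2)

lemma Psi_map (hD : IsDiscreteFibration D) (hfac : E ⋙ D = Diamond.proj S T)
    {x y : A × C} (h : x = y) (q : (Tensor S T).obj (op y.2, y.1)) :
    Psi S T E D hD hfac x ((Tensor S T).map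
      (((eqToHom h : x ⟶ y).2.op, Groupoid.inv (eqToHom h : x ⟶ y).1) :
        (op y.2, y.1) ⟶ (op x.2, x.1)) q) = Psi S T E D hD hfac y q := by
  subst h
  have e : (((eqToHom (rfl : x = x) : x ⟶ x).2.op,
      Groupoid.inv (eqToHom (rfl : x = x) : x ⟶ x).1) :
      (op x.2, x.1) ⟶ (op x.2, x.1)) = 𝟙 (op x.2, x.1) := by
    rw [prod_id]
    simp [eqToHom_refl, prod_id, Groupoid.inv_eq_inv]
  rw [e, FunctorToTypes.map_id_apply]

/-- the element of the composite distributor attached to an object of the pullback -/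
def elt (d : Diamond S T) : (Tensor S T).obj (op d.c, d.a) :=
  Quot.mk _ ⟨d.b, d.t, d.s⟩

/-- the comparison morphism of a structured arrow, pushed into `A × C` -/
def chi (hfac : E ⋙ D = Diamond.proj S T) {m : M} (u : StructuredArrow m E) :
    D.obj m ⟶ (u.right.a, u.right.c) :=
  D.map u.hom ≫ eqToHom (Functor.congr_obj hfac u.right)

/-- the candidate element over `m` determined by a structured arrow -/
def sval (hfac : E ⋙ D = Diamond.proj S T) {m : M} (u : StructuredArrow m E) :
    (Tensor S T).obj (op (D.obj m).2, (D.obj m).1) :=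
  (Tensor S T).map (((chi S T E D hfac u).2.op, Groupoid.inv (chi S T E D hfac u).1) :
    (op u.right.c, u.right.a) ⟶ (op (D.obj m).2, (D.obj m).1)) (elt S T u.right)

lemma chi_comp (hfac : E ⋙ D = Diamond.proj S T) {m : M} {u v : StructuredArrow m E}
    (w : u ⟶ v) :
    chi S T E D hfac v = chi S T E D hfac u ≫ (Diamond.proj S T).map w.right := by
  have hw : u.hom ≫ E.map w.right = v.hom := StructuredArrow.w w
  have hg := Functor.congr_hom hfac w.right
  unfold chi
  rw [← hw, Functor.map_comp, Category.assoc,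
    show D.map (E.map w.right) = (E ⋙ D).map w.right from rfl, hg]
  simp only [Category.assoc]
  erw [eqToHom_trans, eqToHom_refl, Category.comp_id]
  exact (Category.assoc _ _ _).symm

lemma sval_hom (hfac : E ⋙ D = Diamond.proj S T) {m : M} {u v : StructuredArrow m E}
    (w : u ⟶ v) : sval S T E D hfac u = sval S T E D hfac v := by
  have hshift : elt S T u.right = (Tensor S T).map
      ((w.right.γ.op, Groupoid.inv w.right.α) :
        (op v.right.c, v.right.a) ⟶ (op u.right.c, u.right.a)) (elt S T v.right) :=
    tensor_shift (Tensor S T) w.right.α w.right.γ ((Qfun S T).map w.right).comm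
  have hc1 : (chi S T E D hfac v).1 = (chi S T E D hfac u).1 ≫ w.right.α := by
    rw [chi_comp S T E D hfac w]; rfl
  have hc2 : (chi S T E D hfac v).2 = (chi S T E D hfac u).2 ≫ w.right.γ := by
    rw [chi_comp S T E D hfac w]; rfl
  unfold sval
  rw [hshift, ← FunctorToTypes.map_comp_apply]
  refine congrArg (fun h => (Tensor S T).map h (elt S T v.right)) ?_
  refine Prod.ext ?_ ?_
  · show w.right.γ.op ≫ (chi S T E D hfac u).2.op = (chi S T E D hfac v).2.op
    rw [hc2, op_comp]
  · show Groupoid.inv w.right.α ≫ Groupoid.inv (chi S T E D hfac u).1 =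
      Groupoid.inv (chi S T E D hfac v).1
    rw [hc1]
    simp [Groupoid.inv_eq_inv]

lemma sval_const (hE : E.Final) (hfac : E ⋙ D = Diamond.proj S T) {m : M}
    (u v : StructuredArrow m E) : sval S T E D hfac u = sval S T E D hfac v := by
  haveI := hE.out m
  exact constant_of_preserves_morphisms (fun u => sval S T E D hfac u)
    (fun u v w => sval_hom S T E D hfac w) u v

/-- the canonical element of the composite distributor over an object of `M` -/
noncomputable def sig (hE : E.Final) (hfac : E ⋙ D = Diamond.proj S T) (m : M) :
    (Tensor S T).obj (op (D.obj m).2, (D.obj m).1) :=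
  sval S T E D hfac ((hE.out m).is_nonempty.some)

lemma sig_eq (hE : E.Final) (hfac : E ⋙ D = Diamond.proj S T) {m : M}
    (u : StructuredArrow m E) : sig S T E D hE hfac m = sval S T E D hfac u :=
  sval_const S T E D hE hfac _ u

lemma sig_nat (hE : E.Final) (hfac : E ⋙ D = Diamond.proj S T) {m m' : M} (f : m ⟶ m') :
    (Tensor S T).map ((𝟙 (op (D.obj m).2), (D.map f).1) :
        (op (D.obj m).2, (D.obj m).1) ⟶ (op (D.obj m).2, (D.obj m').1))
      (sig S T E D hE hfac m) =
    (Tensor S T).map (((D.map f).2.op, 𝟙 (D.obj m').1) :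
        (op (D.obj m').2, (D.obj m').1) ⟶ (op (D.obj m).2, (D.obj m').1))
      (sig S T E D hE hfac m') := by
  have u' : StructuredArrow m' E := (hE.out m').is_nonempty.some
  have hchi : chi S T E D hfac (StructuredArrow.mk (f ≫ u'.hom)) =
      D.map f ≫ chi S T E D hfac u' := by
    unfold chi
    rw [StructuredArrow.mk_hom_eq_self, Functor.map_comp, Category.assoc]
  rw [sig_eq S T E D hE hfac (StructuredArrow.mk (f ≫ u'.hom)),
    sig_eq S T E D hE hfac u']
  unfold sval
  rw [← FunctorToTypes.map_comp_apply, ← FunctorToTypes.map_comp_apply]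
  refine congrArg (fun h => (Tensor S T).map h (elt S T u'.right)) ?_
  refine Prod.ext ?_ ?_
  · show (chi S T E D hfac (StructuredArrow.mk (f ≫ u'.hom))).2.op ≫ 𝟙 (op (D.obj m).2) =
      (chi S T E D hfac u').2.op ≫ (D.map f).2.op
    rw [hchi]
    simp
  · show Groupoid.inv (chi S T E D hfac (StructuredArrow.mk (f ≫ u'.hom))).1 ≫ (D.map f).1 =
      Groupoid.inv (chi S T E D hfac u').1 ≫ 𝟙 (D.obj m').1
    rw [hchi]
    simp [Groupoid.inv_eq_inv]

lemma Psi_sig (hE : E.Final) (hD : IsDiscreteFibration D)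
    (hfac : E ⋙ D = Diamond.proj S T) (m : M) :
    Psi S T E D hD hfac (D.obj m) (sig S T E D hE hfac m) = m := by
  have u : StructuredArrow m E := (hE.out m).is_nonempty.some
  rw [sig_eq S T E D hE hfac u]
  let χ : D.obj m ⟶ (u.right.a, u.right.c) := chi S T E D hfac u
  let d' : Diamond S T :=
    ⟨(D.obj m).1, u.right.b, (D.obj m).2,
      S.map ((𝟙 (op u.right.b), Groupoid.inv χ.1) :
        (op u.right.b, u.right.a) ⟶ (op u.right.b, (D.obj m).1)) u.right.s,
      T.map ((χ.2.op, 𝟙 u.right.b) :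
        (op u.right.c, u.right.b) ⟶ (op (D.obj m).2, u.right.b)) u.right.t⟩
  show E.obj d' = m
  have hS' : S.map ((𝟙 (op u.right.b), χ.1) :
      (op u.right.b, (D.obj m).1) ⟶ (op u.right.b, u.right.a)) d'.s =
      S.map (((𝟙 u.right.b).op, 𝟙 u.right.a) :
      (op u.right.b, u.right.a) ⟶ (op u.right.b, u.right.a)) u.right.s := by
    show S.map _ (S.map _ u.right.s) = _
    rw [← FunctorToTypes.map_comp_apply]
    have e1 : (((𝟙 (op u.right.b), Groupoid.inv χ.1) :
        (op u.right.b, u.right.a) ⟶ (op u.right.b, (D.obj m).1)) ≫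
        ((𝟙 (op u.right.b), χ.1) :
        (op u.right.b, (D.obj m).1) ⟶ (op u.right.b, u.right.a))) =
        𝟙 (op u.right.b, u.right.a) := by
      refine Prod.ext ?_ ?_ <;> simp [Groupoid.inv_eq_inv]
    rw [e1, FunctorToTypes.map_id_apply,
      show (((𝟙 u.right.b).op, 𝟙 u.right.a) :
        (op u.right.b, u.right.a) ⟶ (op u.right.b, u.right.a)) =
        𝟙 (op u.right.b, u.right.a) from rfl, FunctorToTypes.map_id_apply]
  have hT' : T.map ((𝟙 (op d'.c), 𝟙 u.right.b) :
      (op d'.c, d'.b) ⟶ (op d'.c, u.right.b)) d'.t =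
      T.map ((χ.2.op, 𝟙 u.right.b) :
      (op u.right.c, u.right.b) ⟶ (op d'.c, u.right.b)) u.right.t := by
    rw [show ((𝟙 (op d'.c), 𝟙 u.right.b) : (op d'.c, d'.b) ⟶ (op d'.c, u.right.b)) =
      𝟙 (op d'.c, u.right.b) from rfl, FunctorToTypes.map_id_apply]
  let ff : d' ⟶ u.right := ⟨χ.1, 𝟙 u.right.b, χ.2, hS', hT'⟩
  have hproj : (Diamond.proj S T).map ff = χ := rfl
  have h1 : D.obj (E.obj d') = D.obj m := Functor.congr_obj hfac d'
  have hDff : D.map (E.map ff) =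
      eqToHom h1 ≫ χ ≫ eqToHom (Functor.congr_obj hfac u.right).symm := by
    rw [show D.map (E.map ff) = (E ⋙ D).map ff from rfl, Functor.congr_hom hfac ff, hproj]
    rfl
  have hDu : D.map u.hom = χ ≫ eqToHom (Functor.congr_obj hfac u.right).symm := by
    show D.map u.hom = (D.map u.hom ≫ eqToHom (Functor.congr_obj hfac u.right)) ≫
      eqToHom (Functor.congr_obj hfac u.right).symm
    simp
  have key := lift_eq D hD (E.map ff) u.hom (by
    rw [hDff, hDu]
    exact sigma_eqToHom_comp h1 (χ ≫ eqToHom (Functor.congr_obj hfac u.right).symm))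
  exact congrArg Sigma.fst key

/-- the comparison functor from `M` to the category of elements of `T ⊗ S` -/
noncomputable def L (hE : E.Final) (hfac : E ⋙ D = Diamond.proj S T) :
    M ⥤ Delt (Tensor S T) where
  obj m := ⟨(D.obj m).1, (D.obj m).2, sig S T E D hE hfac m⟩
  map {m m'} f := ⟨(D.map f).1, (D.map f).2, sig_nat S T E D hE hfac f⟩
  map_id m := by
    refine Delt.Hom.ext ?_ ?_
    · show (D.map (𝟙 m)).1 = 𝟙 (D.obj m).1
      rw [D.map_id]; rfl
    · show (D.map (𝟙 m)).2 = 𝟙 (D.obj m).2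
      rw [D.map_id]; rfl
  map_comp {x y z} f g := by
    refine Delt.Hom.ext ?_ ?_
    · show (D.map (f ≫ g)).1 = (D.map f).1 ≫ (D.map g).1
      rw [D.map_comp]; rfl
    · show (D.map (f ≫ g)).2 = (D.map f).2 ≫ (D.map g).2
      rw [D.map_comp]; rfl

lemma L_faithful (hE : E.Final) (hD : IsDiscreteFibration D)
    (hfac : E ⋙ D = Diamond.proj S T) : (L S T E D hE hfac).Faithful := by
  constructor
  intro m m' f g h
  refine (D_faithful D hD).map_injective ?_
  refine Prod.ext ?_ ?_
  · exact congrArg Delt.Hom.α h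
  · exact congrArg Delt.Hom.β h

lemma L_full (hE : E.Final) (hD : IsDiscreteFibration D)
    (hfac : E ⋙ D = Diamond.proj S T) : (L S T E D hE hfac).Full := by
  constructor
  intro m m' h
  obtain ⟨⟨n, g⟩, hg, -⟩ := hD ((h.α, h.β) : D.obj m ⟶ D.obj m')
  obtain ⟨e, he⟩ := sigma_hom_eq hg
  have hnm : n = m := by
    have hn := (Psi_sig S T E D hE hD hfac n).symm
    have hm := (Psi_sig S T E D hE hD hfac m).symm
    have h1 : sig S T E D hE hfac n = (Tensor S T).map
        (((D.map g).2.op, Groupoid.inv (D.map g).1) :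
          (op (D.obj m').2, (D.obj m').1) ⟶ (op (D.obj n).2, (D.obj n).1))
        (sig S T E D hE hfac m') :=
      tensor_shift (Tensor S T) (D.map g).1 (D.map g).2 (sig_nat S T E D hE hfac g)
    have h2 : sig S T E D hE hfac m = (Tensor S T).map
        ((h.β.op, Groupoid.inv h.α) :
          (op (D.obj m').2, (D.obj m').1) ⟶ (op (D.obj m).2, (D.obj m).1))
        (sig S T E D hE hfac m') :=
      tensor_shift (Tensor S T) h.α h.β h.comm
    have hcomp : (((D.map g).2.op, Groupoid.inv (D.map g).1) :
        (op (D.obj m').2, (D.obj m').1) ⟶ (op (D.obj n).2, (D.obj n).1)) =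
        @CategoryStruct.comp (Cᵒᵖ × A) _ (op (D.obj m').2, (D.obj m').1)
          (op (D.obj m).2, (D.obj m).1) (op (D.obj n).2, (D.obj n).1)
          ((h.β.op, Groupoid.inv h.α) :
            (op (D.obj m').2, (D.obj m').1) ⟶ (op (D.obj m).2, (D.obj m).1))
          (((eqToHom e : D.obj n ⟶ D.obj m).2.op,
            Groupoid.inv (eqToHom e : D.obj n ⟶ D.obj m).1) :
            (op (D.obj m).2, (D.obj m).1) ⟶ (op (D.obj n).2, (D.obj n).1)) := by
      refine Prod.ext ?_ ?_
      · show (D.map g).2.op = h.β.op ≫ (eqToHom e).2.op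
        rw [he]
        rfl
      · show Groupoid.inv (D.map g).1 = Groupoid.inv h.α ≫ Groupoid.inv (eqToHom e).1
        rw [he, prod_comp_fst', Groupoid.inv_eq_inv, Groupoid.inv_eq_inv]
        erw [Groupoid.inv_eq_inv]
        exact IsIso.inv_comp ..
    rw [h1, hcomp, FunctorToTypes.map_comp_apply, ← h2] at hn
    rw [Psi_map S T E D hD hfac e (sig S T E D hE hfac m)] at hn
    exact hn.trans hm.symm
  subst hnm
  have he' : D.map g = ((h.α, h.β) : D.obj n ⟶ D.obj m') := by
    rw [he, Subsingleton.elim e (rfl : D.obj n = D.obj n), eqToHom_refl, Category.id_comp]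
  refine ⟨g, ?_⟩
  refine Delt.Hom.ext ?_ ?_
  · show (D.map g).1 = h.α
    rw [he']
  · show (D.map g).2 = h.β
    rw [he']

lemma eqToHom_pair_id {x : A × C} :
    (((eqToHom (rfl : x = x) : x ⟶ x).2.op,
      Groupoid.inv (eqToHom (rfl : x = x) : x ⟶ x).1) :
      (op x.2, x.1) ⟶ (op x.2, x.1)) = 𝟙 (op x.2, x.1) := by
  refine Prod.ext ?_ ?_ <;> simp [Groupoid.inv_eq_inv]

lemma delt_obj_eq {x y : A × C} (h : x = y) (q : (Tensor S T).obj (op y.2, y.1)) :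
    (⟨x.1, x.2, (Tensor S T).map
      (((eqToHom h : x ⟶ y).2.op, Groupoid.inv (eqToHom h : x ⟶ y).1) :
        (op y.2, y.1) ⟶ (op x.2, x.1)) q⟩ : Delt (Tensor S T)) = ⟨y.1, y.2, q⟩ := by
  subst h
  rw [eqToHom_pair_id, FunctorToTypes.map_id_apply]

lemma L_essSurj (hE : E.Final) (hD : IsDiscreteFibration D)
    (hfac : E ⋙ D = Diamond.proj S T) : (L S T E D hE hfac).EssSurj := by
  constructor
  intro X
  obtain ⟨a, c, q⟩ := X
  obtain ⟨p, hp⟩ := Quot.exists_rep q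
  let d : Diamond S T := ⟨a, p.1, c, p.2.2, p.2.1⟩
  have h : D.obj (E.obj d) = ((a, c) : A × C) := Functor.congr_obj hfac d
  have hsig : sig S T E D hE hfac (E.obj d) = (Tensor S T).map
      (((eqToHom h : D.obj (E.obj d) ⟶ ((a, c) : A × C)).2.op,
        Groupoid.inv (eqToHom h : D.obj (E.obj d) ⟶ ((a, c) : A × C)).1) :
        (op ((a, c) : A × C).2, ((a, c) : A × C).1) ⟶
          (op (D.obj (E.obj d)).2, (D.obj (E.obj d)).1)) (elt S T d) := by
    rw [sig_eq S T E D hE hfac (StructuredArrow.mk (𝟙 (E.obj d)))]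
    unfold sval
    have hchi : chi S T E D hfac (StructuredArrow.mk (𝟙 (E.obj d))) = eqToHom h := by
      unfold chi
      rw [StructuredArrow.mk_hom_eq_self, D.map_id, Category.id_comp]
    rw [hchi]
    rfl
  refine ⟨E.obj d, ⟨eqToIso ?_⟩⟩
  show (⟨(D.obj (E.obj d)).1, (D.obj (E.obj d)).2,
    sig S T E D hE hfac (E.obj d)⟩ : Delt (Tensor S T)) = ⟨a, c, q⟩
  rw [hsig, ← hp]
  exact delt_obj_eq S T h (Quot.mk _ p)

end Main

/-- In any comprehensive (final, discrete fibration) factorization of the span functor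
`T ⋄ S ⥤ A × C`, the discrete fibration part is equivalent, over `A × C`, to the category
of elements of the composite distributor `T ⊗ S`. -/
theorem comprehensive_factorization_of_span {A : Type u} [Groupoid.{u} A] {B : Type u}
    [Groupoid.{u} B] {C : Type u} [Groupoid.{u} C]
    (S : Bᵒᵖ × A ⥤ Type u) (T : Cᵒᵖ × B ⥤ Type u)
    (M : Type u) [Category.{u} M] (E : Diamond S T ⥤ M) (D : M ⥤ A × C)
    (hE : E.Final) (hD : IsDiscreteFibration D) (hfac : E ⋙ D = Diamond.proj S T) :
    ∃ I : M ≌ Delt (Tensor S T),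
      Nonempty (I.functor ⋙ Delt.proj (Tensor S T) ≅ D) := by
  letI : (L S T E D hE hfac).Full := L_full S T E D hE hD hfac
  letI : (L S T E D hE hfac).Faithful := L_faithful S T E D hE hD hfac
  letI : (L S T E D hE hfac).EssSurj := L_essSurj S T E D hE hD hfac
  letI : (L S T E D hE hfac).IsEquivalence := {}
  refine ⟨(L S T E D hE hfac).asEquivalence, ⟨?_⟩⟩
  exact NatIso.ofComponents (fun m => Iso.refl (D.obj m))
    (fun {m m'} f => by
      rw [show ((L S T E D hE hfac).asEquivalence.functor ⋙
        Delt.proj (Tensor S T)).map f = D.map f from rfl]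
      erw [Category.comp_id, Category.id_comp])
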